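/- Fix j ∈ [2, n−1] and a permutation π ∈ S_n. Then π possesses a reduced word (in adjacent transpositions s_1,…,s_{n-1}) accepted by the automaton U(j) if and only if π avoids the pattern jki, i.e., there are no indices i < j < k (with j fixed) such that j, k, i appear as a subword of π in one-line notation. -/

import Mathlib

/-- The permutation of `ℕ` given by a word in the adjacent transpositions:
the letter `m` stands for `s_m = (m, m+1)`. -/
def wordProd (L : List ℕ) : Equiv.Perm ℕ :=
  (L.map (fun m => Equiv.swap m (m + 1))).prod

/-- `L` is a reduced word of `π ∈ S_n`: a word in the letters `s_1, …, s_{n-1}` whose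
product is `π`, of minimal length among such words. -/
def IsRWord (n : ℕ) (π : Equiv.Perm ℕ) (L : List ℕ) : Prop :=
  (∀ m ∈ L, m ∈ Finset.Icc 1 (n - 1)) ∧ wordProd L = π ∧
    ∀ L' : List ℕ, (∀ m ∈ L', m ∈ Finset.Icc 1 (n - 1)) → wordProd L' = π →
      L.length ≤ L'.length

/-- States of the permutree-sorting automata: healthy and ill states (accepting),
indexed by a spine position, and a dead (rejecting) state. -/
inductive AState : Type
  | healthy (m : ℕ) : AState
  | ill (m : ℕ) : AState
  | dead : AState
deriving DecidableEq

/-- Transition function of the automaton `𝕌(j)`: at the healthy state indexed `m`,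
reading `s_m` advances to the healthy state `m+1`, reading `s_{m-1}` moves to the ill
state `m`, from which reading `s_m` leads to the dead state; all other letters loop. -/
def Ustep : AState → ℕ → AState
  | .healthy m, x =>
      if x = m then .healthy (m + 1) else if x + 1 = m then .ill m else .healthy m
  | .ill m, x => if x = m then .dead else .ill m
  | .dead, _ => .dead

/-- The state reached by the automaton `𝕌(j)` after reading the word `L` from left to
right, starting at the healthy state `j`. -/
def Urun (j : ℕ) (L : List ℕ) : AState := L.foldl Ustep (.healthy j)

namespace PT

def s (m : ℕ) : Equiv.Perm ℕ := Equiv.swap m (m+1)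

lemma s_apply (m x : ℕ) : s m x = if x = m then m+1 else if x = m+1 then m else x :=
  Equiv.swap_apply_def m (m+1) x

lemma wordProd_nil : wordProd [] = 1 := rfl

lemma wordProd_cons (m : ℕ) (L : List ℕ) : wordProd (m :: L) = s m * wordProd L := by
  simp [wordProd, s]

lemma s_mul_s (m : ℕ) : s m * s m = 1 := Equiv.swap_mul_self _ _

def Supp (n : ℕ) (π : Equiv.Perm ℕ) : Prop := ∀ x, x ∉ Finset.Icc 1 n → π x = x

lemma supp_one (n : ℕ) : Supp n 1 := fun _ _ => rfl

lemma supp_inv {n : ℕ} {π : Equiv.Perm ℕ} (h : Supp n π) : Supp n π⁻¹ := by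
  intro x hx
  have := h x hx
  conv_lhs => rw [← this]
  simp

lemma supp_mul {n : ℕ} {π σ : Equiv.Perm ℕ} (h : Supp n π) (h' : Supp n σ) :
    Supp n (π * σ) := by
  intro x hx
  simp [Equiv.Perm.mul_apply, h' x hx, h x hx]

lemma supp_s {n m : ℕ} (h1 : 1 ≤ m) (h2 : m + 1 ≤ n) : Supp n (s m) := by
  intro x hx
  simp only [Finset.mem_Icc, not_and_or, not_le] at hx
  rw [s_apply]
  split_ifs with a b <;> omega

lemma supp_apply_mem {n : ℕ} {π : Equiv.Perm ℕ} (h : Supp n π) {x : ℕ}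
    (h1 : 1 ≤ x) (h2 : x ≤ n) : 1 ≤ π x ∧ π x ≤ n := by
  by_contra hc
  have hx : π x ∉ Finset.Icc 1 n := by
    simp only [Finset.mem_Icc]; tauto
  have := h _ hx
  have : π x = x := π.injective this
  rw [this] at hx
  simp only [Finset.mem_Icc] at hx; omega

/-- inversions -/
def inv (n : ℕ) (π : Equiv.Perm ℕ) : Finset (ℕ × ℕ) :=
  ((Finset.Icc 1 n) ×ˢ (Finset.Icc 1 n)).filter fun p => p.1 < p.2 ∧ π p.2 < π p.1

def len (n : ℕ) (π : Equiv.Perm ℕ) : ℕ := (inv n π).card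

lemma len_one (n : ℕ) : len n 1 = 0 := by
  rw [len, Finset.card_eq_zero]
  ext ⟨a, b⟩
  simp only [inv]; rw [Finset.mem_filter]
  simp only [Finset.notMem_empty, iff_false, Equiv.Perm.one_apply]
  rintro ⟨-, h, h'⟩; omega

lemma inv_s_mul {n m : ℕ} {τ : Equiv.Perm ℕ} (hm1 : 1 ≤ m) (hmn : m + 1 ≤ n)
    (hτ : Supp n τ) (huv : τ⁻¹ m < τ⁻¹ (m+1)) :
    inv n (s m * τ) = insert (τ⁻¹ m, τ⁻¹ (m+1)) (inv n τ) ∧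
      (τ⁻¹ m, τ⁻¹ (m+1)) ∉ inv n τ := by
  set u := τ⁻¹ m with hu'
  set v := τ⁻¹ (m+1) with hv'
  have hu : τ u = m := τ.apply_symm_apply m
  have hv : τ v = m + 1 := τ.apply_symm_apply (m+1)
  have huI : 1 ≤ u ∧ u ≤ n := supp_apply_mem (supp_inv hτ) hm1 (by omega)
  have hvI : 1 ≤ v ∧ v ≤ n := supp_apply_mem (supp_inv hτ) (by omega) hmn
  constructor
  · ext ⟨a, b⟩
    simp only [inv]; rw [Finset.mem_filter, Finset.mem_insert, Finset.mem_filter]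
    simp only [Finset.mem_product, Finset.mem_insert, Prod.mk.injEq,
      Finset.mem_Icc, Equiv.Perm.mul_apply]
    have e1 : ∀ x, τ x = m ↔ x = u := fun x => by
      rw [← hu]; exact ⟨fun h => τ.injective h, fun h => by rw [h]⟩
    have e2 : ∀ x, τ x = m + 1 ↔ x = v := fun x => by
      rw [← hv]; exact ⟨fun h => τ.injective h, fun h => by rw [h]⟩
    constructor
    · rintro ⟨⟨ha, hb⟩, hab, hlt⟩
      rw [s_apply, s_apply] at hlt
      have f1 := e1 a; have f2 := e2 a; have f3 := e1 b; have f4 := e2 b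
      have hne : τ a ≠ τ b := fun h => by have := τ.injective h; omega
      split_ifs at hlt <;> omega
    · rintro (⟨rfl, rfl⟩ | ⟨⟨ha, hb⟩, hab, hlt⟩)
      · refine ⟨⟨huI, hvI⟩, huv, ?_⟩
        rw [hu, hv, s_apply, s_apply]
        split_ifs <;> omega
      · refine ⟨⟨ha, hb⟩, hab, ?_⟩
        have f1 := e1 a; have f2 := e2 a; have f3 := e1 b; have f4 := e2 b
        rw [s_apply, s_apply]
        split_ifs <;> omega
  · simp only [inv, Finset.mem_filter, Finset.mem_product, hu, hv]
    omega

lemma len_s_mul_of_lt {n m : ℕ} {τ : Equiv.Perm ℕ} (hm1 : 1 ≤ m) (hmn : m + 1 ≤ n)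
    (hτ : Supp n τ) (huv : τ⁻¹ m < τ⁻¹ (m+1)) :
    len n (s m * τ) = len n τ + 1 := by
  obtain ⟨he, hn⟩ := inv_s_mul hm1 hmn hτ huv
  rw [len, len, he, Finset.card_insert_of_notMem hn]

lemma len_s_mul_of_gt {n m : ℕ} {τ : Equiv.Perm ℕ} (hm1 : 1 ≤ m) (hmn : m + 1 ≤ n)
    (hτ : Supp n τ) (huv : τ⁻¹ (m+1) < τ⁻¹ m) :
    len n τ = len n (s m * τ) + 1 := by
  have hss : s m * (s m * τ) = τ := by rw [← mul_assoc, s_mul_s, one_mul]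
  have h1 : (s m * τ)⁻¹ m = τ⁻¹ (m + 1) := by
    simp [mul_inv_rev, Equiv.Perm.mul_apply, s, Equiv.swap_inv, Equiv.swap_apply_left]
  have h2 : (s m * τ)⁻¹ (m+1) = τ⁻¹ m := by
    simp [mul_inv_rev, Equiv.Perm.mul_apply, s, Equiv.swap_inv, Equiv.swap_apply_right]
  have := len_s_mul_of_lt hm1 hmn (supp_mul (supp_s hm1 hmn) hτ) (by rw [h1, h2]; exact huv)
  rw [hss] at this
  exact this

lemma inv_ne_iff {m : ℕ} {τ : Equiv.Perm ℕ} : τ⁻¹ m ≠ τ⁻¹ (m+1) := by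
  intro h
  have := τ⁻¹.injective h
  omega

lemma len_s_mul_le {n m : ℕ} {τ : Equiv.Perm ℕ} (hm1 : 1 ≤ m) (hmn : m + 1 ≤ n)
    (hτ : Supp n τ) : len n (s m * τ) ≤ len n τ + 1 := by
  rcases lt_or_gt_of_ne (inv_ne_iff (m := m) (τ := τ)) with h | h
  · rw [len_s_mul_of_lt hm1 hmn hτ h]
  · rw [len_s_mul_of_gt hm1 hmn hτ h]; omega

lemma mem_Icc_letter {n m : ℕ} (h : m ∈ Finset.Icc 1 (n-1)) : 1 ≤ m ∧ m + 1 ≤ n := by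
  simp only [Finset.mem_Icc] at h; omega

lemma supp_wordProd {n : ℕ} {L : List ℕ} (hL : ∀ m ∈ L, m ∈ Finset.Icc 1 (n-1)) :
    Supp n (wordProd L) := by
  induction L with
  | nil => exact supp_one n
  | cons m L ih =>
    rw [wordProd_cons]
    obtain ⟨h1, h2⟩ := mem_Icc_letter (hL m (by simp))
    exact supp_mul (supp_s h1 h2) (ih fun x hx => hL x (List.mem_cons_of_mem _ hx))

lemma len_le_length {n : ℕ} {L : List ℕ} (hL : ∀ m ∈ L, m ∈ Finset.Icc 1 (n-1)) :
    len n (wordProd L) ≤ L.length := by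
  induction L with
  | nil => rw [wordProd_nil]; simp [len_one]
  | cons m L ih =>
    rw [wordProd_cons]
    obtain ⟨h1, h2⟩ := mem_Icc_letter (hL m (by simp))
    have hs := supp_wordProd (fun x hx => hL x (List.mem_cons_of_mem _ hx))
    have := len_s_mul_le h1 h2 hs
    have := ih (fun x hx => hL x (List.mem_cons_of_mem _ hx))
    simp only [List.length_cons]
    omega

/-- existence of a (left) descent for a nontrivial permutation -/
lemma exists_descent {n : ℕ} {π : Equiv.Perm ℕ} (hπ : Supp n π) (hne : π ≠ 1) :
    ∃ m, 1 ≤ m ∧ m + 1 ≤ n ∧ π⁻¹ (m+1) < π⁻¹ m := by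
  by_contra hc
  push_neg at hc
  have hmono : ∀ m, 1 ≤ m → m + 1 ≤ n → π⁻¹ m < π⁻¹ (m+1) := by
    intro m h1 h2
    have := hc m h1 h2
    have := inv_ne_iff (m := m) (τ := π)
    omega
  have hge : ∀ x, 1 ≤ x → x ≤ n → x ≤ π⁻¹ x := by
    intro x
    induction x with
    | zero => omega
    | succ x ih =>
      intro h1 h2
      rcases Nat.eq_zero_or_pos x with h | h
      · subst h; exact (supp_apply_mem (supp_inv hπ) (by omega) h2).1
      · have := ih (by omega) (by omega)
        have := hmono x (by omega) h2
        omega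
  have hfix : ∀ k x, n ≤ x + k → 1 ≤ x → x ≤ n → π⁻¹ x = x := by
    intro k
    induction k with
    | zero =>
      intro x hx h1 h2
      have := hge x h1 h2
      have := (supp_apply_mem (supp_inv hπ) h1 h2).2
      omega
    | succ k ih =>
      intro x hx h1 h2
      have h3 := hge x h1 h2
      rcases eq_or_lt_of_le h3 with h | h
      · omega
      · exfalso
        set t := π⁻¹ x with ht
        have htn : t ≤ n := (supp_apply_mem (supp_inv hπ) h1 h2).2
        have : π⁻¹ t = t := ih t (by omega) (by omega) htn
        have : π⁻¹ x = π⁻¹ t := by rw [this, ht]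
        have := π⁻¹.injective this
        omega
  have : π⁻¹ = 1 := by
    ext x
    rcases Classical.em (x ∈ Finset.Icc 1 n) with h | h
    · simp only [Finset.mem_Icc] at h
      simpa using hfix n x (by omega) h.1 h.2
    · simpa using supp_inv hπ x h
  exact hne (by rw [← inv_inv π, this, inv_one])

lemma s_le_iff {m j x : ℕ} (h : m ≠ j) : s m x ≤ j ↔ x ≤ j := by
  rw [s_apply]; split_ifs <;> omega

lemma pres_inv {j : ℕ} {π : Equiv.Perm ℕ} (h : ∀ x, π x ≤ j ↔ x ≤ j) :
    ∀ x, π⁻¹ x ≤ j ↔ x ≤ j := by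
  intro x
  have := h (π⁻¹ x)
  rw [show π (π⁻¹ x) = x from π.apply_symm_apply x] at this
  exact this.symm

lemma exists_word_avoid {n : ℕ} (j : ℕ) :
    ∀ N (π : Equiv.Perm ℕ), len n π ≤ N → Supp n π → (∀ x, π x ≤ j ↔ x ≤ j) →
    ∃ L, (∀ m ∈ L, m ∈ Finset.Icc 1 (n-1)) ∧ wordProd L = π ∧ L.length = len n π ∧ j ∉ L := by
  intro N
  induction N with
  | zero =>
    intro π hlen hπ hpres
    by_cases h1 : π = 1
    · subst h1; exact ⟨[], by simp, rfl, by simp [len_one], by simp⟩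
    · exfalso
      obtain ⟨m, hm1, hm2, hd⟩ := exists_descent hπ h1
      have : (π⁻¹ (m+1), π⁻¹ m) ∈ inv n π := by
        simp only [inv, Finset.mem_filter, Finset.mem_product]
        refine ⟨⟨?_, ?_⟩, hd, ?_⟩
        · simpa using supp_apply_mem (supp_inv hπ) (by omega) hm2
        · simpa using supp_apply_mem (supp_inv hπ) hm1 (by omega)
        · rw [show ∀ y, π (π⁻¹ y) = y from π.apply_symm_apply, show ∀ y, π (π⁻¹ y) = y from π.apply_symm_apply]; omega
      have : 0 < len n π := Finset.card_pos.mpr ⟨_, this⟩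
      omega
  | succ N ih =>
    intro π hlen hπ hpres
    by_cases h1 : π = 1
    · subst h1; exact ⟨[], by simp, rfl, by simp [len_one], by simp⟩
    · obtain ⟨m, hm1, hm2, hd⟩ := exists_descent hπ h1
      have hmj : m ≠ j := by
        intro h
        have h3 : π⁻¹ j ≤ j := (pres_inv hpres j).mpr le_rfl
        have h4 : ¬ π⁻¹ (j+1) ≤ j := fun hh => by
          have := (pres_inv hpres (j+1)).mp hh; omega
        rw [h] at hd
        omega
      set π₁ := s m * π with hπ₁
      have hlen1 : len n π = len n π₁ + 1 := len_s_mul_of_gt hm1 hm2 hπ hd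
      have hsupp1 : Supp n π₁ := supp_mul (supp_s hm1 hm2) hπ
      have hpres1 : ∀ x, π₁ x ≤ j ↔ x ≤ j := by
        intro x
        rw [hπ₁, Equiv.Perm.mul_apply, s_le_iff hmj, hpres]
      obtain ⟨L, hL, hprod, hlenL, hjL⟩ := ih π₁ (by omega) hsupp1 hpres1
      refine ⟨m :: L, ?_, ?_, ?_, ?_⟩
      · intro x hx
        rcases List.mem_cons.mp hx with h | h
        · subst h; simp only [Finset.mem_Icc]; omega
        · exact hL x h
      · rw [wordProd_cons, hprod, hπ₁, ← mul_assoc, s_mul_s, one_mul]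
      · simp [hlenL, hlen1]
      · simp only [List.mem_cons, not_or]
        exact ⟨fun h => hmj h.symm, hjL⟩

lemma exists_word {n : ℕ} {π : Equiv.Perm ℕ} (hπ : Supp n π) :
    ∃ L, (∀ m ∈ L, m ∈ Finset.Icc 1 (n-1)) ∧ wordProd L = π ∧ L.length = len n π := by
  have hpres : ∀ x, π x ≤ 0 ↔ x ≤ 0 := by
    intro x
    have h0 : π 0 = 0 := hπ 0 (by simp)
    constructor
    · intro h
      have : π x = π 0 := by omega
      have := π.injective this; omega
    · intro h
      have : x = 0 := by omega
      subst this; omega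
  obtain ⟨L, h1, h2, h3, -⟩ := exists_word_avoid 0 (len n π) π le_rfl hπ hpres
  exact ⟨L, h1, h2, h3⟩

lemma isRWord_iff {n : ℕ} {π : Equiv.Perm ℕ} (hπ : Supp n π) (L : List ℕ) :
    IsRWord n π L ↔
      (∀ m ∈ L, m ∈ Finset.Icc 1 (n-1)) ∧ wordProd L = π ∧ L.length = len n π := by
  constructor
  · rintro ⟨h1, h2, h3⟩
    refine ⟨h1, h2, le_antisymm ?_ ?_⟩
    · obtain ⟨L', hL', hp', hl'⟩ := exists_word hπ
      have := h3 L' hL' hp'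
      omega
    · rw [← h2]; exact len_le_length h1
  · rintro ⟨h1, h2, h3⟩
    refine ⟨h1, h2, fun L' hL' hp' => ?_⟩
    have := len_le_length hL'
    rw [hp'] at this
    omega

lemma foldl_dead (L : List ℕ) : L.foldl Ustep .dead = .dead := by
  induction L with
  | nil => rfl
  | cons x L ih => simpa [Ustep] using ih

lemma foldl_ill_of_not_mem {j : ℕ} {L : List ℕ} (h : j ∉ L) :
    L.foldl Ustep (.ill j) = .ill j := by
  induction L with
  | nil => rfl
  | cons x L ih =>
    simp only [List.mem_cons, not_or] at h
    have : Ustep (.ill j) x = .ill j := by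
      simp only [Ustep, if_neg (show ¬ x = j from fun hh => h.1 hh.symm)]
    rw [List.foldl_cons, this]
    exact ih h.2

lemma foldl_ill_eq_dead {j : ℕ} : ∀ {L : List ℕ}, j ∈ L →
    L.foldl Ustep (.ill j) = .dead := by
  intro L
  induction L with
  | nil => intro h; simp at h
  | cons x L ih =>
    intro hmem
    by_cases hx : x = j
    · subst hx
      rw [List.foldl_cons]
      have : Ustep (.ill x) x = .dead := by simp [Ustep]
      rw [this, foldl_dead]
    · rw [List.foldl_cons]
      have : Ustep (.ill j) x = .ill j := by
        simp only [Ustep, if_neg hx]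
      rw [this]
      rcases List.mem_cons.mp hmem with hh | hh
      · exact absurd hh.symm hx
      · exact ih hh

lemma not_mem_of_foldl_ill {j : ℕ} {L : List ℕ}
    (h : L.foldl Ustep (.ill j) ≠ .dead) : j ∉ L :=
  fun hmem => h (foldl_ill_eq_dead hmem)

lemma foldl_safe {n : ℕ} : ∀ (L : List ℕ), (∀ x ∈ L, x + 1 ≤ n) → ∀ m, n ≤ m →
    L.foldl Ustep (.healthy m) ≠ .dead ∧ L.foldl Ustep (.ill m) ≠ .dead := by
  intro L
  induction L with
  | nil => intro _ m _; exact ⟨by simp, by simp⟩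
  | cons x L ih =>
    intro hL m hm
    have hx : x + 1 ≤ n := hL x (by simp)
    have hL' : ∀ y ∈ L, y + 1 ≤ n := fun y hy => hL y (List.mem_cons_of_mem _ hy)
    constructor
    · rw [List.foldl_cons]
      have hxm : x ≠ m := by omega
      by_cases h2 : x + 1 = m
      · have : Ustep (.healthy m) x = .ill m := by simp [Ustep, hxm, h2]
        rw [this]; exact (ih hL' m hm).2
      · have : Ustep (.healthy m) x = .healthy m := by simp [Ustep, hxm, h2]
        rw [this]; exact (ih hL' m hm).1
    · rw [List.foldl_cons]
      have hxm : x ≠ m := by omega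
      have : Ustep (.ill m) x = .ill m := by simp [Ustep, hxm]
      rw [this]; exact (ih hL' m hm).2

/-- occurrence of the pattern jki -/
def Occ (n j : ℕ) (π : Equiv.Perm ℕ) : Prop :=
  ∃ p q r : ℕ, 1 ≤ p ∧ p < q ∧ q < r ∧ r ≤ n ∧ π p = j ∧ j < π q ∧ π r < j

lemma occ_loop {n j m : ℕ} {π : Equiv.Perm ℕ} (h1 : m ≠ j) (h2 : m + 1 ≠ j) :
    Occ n j (s m * π) ↔ Occ n j π := by
  have key : ∀ x, ((s m * π) x = j ↔ π x = j) ∧ (j < (s m * π) x ↔ j < π x) ∧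
      ((s m * π) x < j ↔ π x < j) := by
    intro x
    simp only [Equiv.Perm.mul_apply, s_apply]
    split_ifs <;> omega
  constructor
  · rintro ⟨p, q, r, h3, h4, h5, h6, h7, h8, h9⟩
    exact ⟨p, q, r, h3, h4, h5, h6, (key p).1.mp h7, (key q).2.1.mp h8, (key r).2.2.mp h9⟩
  · rintro ⟨p, q, r, h3, h4, h5, h6, h7, h8, h9⟩
    exact ⟨p, q, r, h3, h4, h5, h6, (key p).1.mpr h7, (key q).2.1.mpr h8, (key r).2.2.mpr h9⟩

lemma occ_up {n j : ℕ} {π : Equiv.Perm ℕ} (hd : π⁻¹ (j+1) < π⁻¹ j) :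
    Occ n j π ↔ Occ n (j+1) (s j * π) := by
  constructor
  · rintro ⟨p, q, r, h3, h4, h5, h6, h7, h8, h9⟩
    have hp : p = π⁻¹ j := by rw [← h7]; simp
    have hq : π q ≠ j + 1 := by
      intro hh
      have : q = π⁻¹ (j+1) := by rw [← hh]; simp
      omega
    refine ⟨p, q, r, h3, h4, h5, h6, ?_, ?_, ?_⟩
    · simp only [Equiv.Perm.mul_apply, h7, s_apply]; simp
    · simp only [Equiv.Perm.mul_apply, s_apply]; split_ifs <;> omega
    · simp only [Equiv.Perm.mul_apply, s_apply]; split_ifs <;> omega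
  · rintro ⟨p, q, r, h3, h4, h5, h6, h7, h8, h9⟩
    simp only [Equiv.Perm.mul_apply, s_apply] at h7 h8 h9
    have hπp : π p = j := by
      revert h7; split_ifs <;> omega
    have hp : p = π⁻¹ j := by rw [← hπp]; simp
    have hr : π r ≠ j + 1 := by
      intro hh
      have : r = π⁻¹ (j+1) := by rw [← hh]; simp
      omega
    refine ⟨p, q, r, h3, h4, h5, h6, hπp, ?_, ?_⟩
    · revert h8; split_ifs <;> omega
    · revert h9; split_ifs <;> omega

lemma occ_ill {n k : ℕ} {π : Equiv.Perm ℕ} (hpres : ∀ x, π x ≤ k + 1 ↔ x ≤ k + 1) :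
    ¬ Occ n (k+1) (s k * π) := by
  rintro ⟨p, q, r, h3, h4, h5, h6, h7, h8, h9⟩
  simp only [Equiv.Perm.mul_apply, s_apply] at h7 h8 h9
  have hp : π p ≤ k + 1 := by revert h7; split_ifs <;> omega
  have hq : ¬ π q ≤ k + 1 := by revert h8; split_ifs <;> omega
  have hr : π r ≤ k + 1 := by revert h9; split_ifs <;> omega
  have t1 := (hpres p).mp hp
  have t2 : ¬ q ≤ k + 1 := fun hh => hq ((hpres q).mpr hh)
  have t3 := (hpres r).mp hr
  omega

lemma chain_lt {f : ℕ → ℕ} {P : ℕ → Prop} (h : ∀ m, P m → f m < f (m+1)) :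
    ∀ b a, a < b → (∀ m, a ≤ m → m < b → P m) → f a < f b := by
  intro b
  induction b with
  | zero => omega
  | succ b ih =>
    intro a hab hP
    rcases Nat.lt_or_ge a b with hab' | hab'
    · have h1 := ih a hab' (fun m hm hm' => hP m hm (by omega))
      have h2 := h b (hP b (by omega) (by omega))
      omega
    · have : a = b := by omega
      subst this
      exact h a (hP a le_rfl (by omega))

lemma shuffle {n j : ℕ} {π : Equiv.Perm ℕ} (hπ : Supp n π) (hj2 : 2 ≤ j)
    (hjn : j + 1 ≤ n)
    (hnd : ∀ m, 1 ≤ m → m + 1 ≤ n → m + 1 ≠ j → π⁻¹ m < π⁻¹ (m+1))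
    (hP : ¬ Occ n j π) : ∀ x, π x ≤ j ↔ x ≤ j := by
  set f : ℕ → ℕ := fun x => π⁻¹ x with hf
  have hfinj : Function.Injective f := fun a b h => π⁻¹.injective h
  have hfmem : ∀ x, 1 ≤ x → x ≤ n → 1 ≤ f x ∧ f x ≤ n := fun x h1 h2 =>
    supp_apply_mem (supp_inv hπ) h1 h2
  have hπf : ∀ x, π (f x) = x := fun x => π.apply_symm_apply x
  have hstepA : f j < f (j+1) := hnd j (by omega) hjn (by omega)
  have hstepB : f (j-1) < f (j+1) := by
    rcases Nat.lt_trichotomy (f (j-1)) (f (j+1)) with h | h | h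
    · exact h
    · exact absurd (hfinj h) (by omega)
    · exfalso
      apply hP
      refine ⟨f j, f (j+1), f (j-1), (hfmem j (by omega) (by omega)).1, hstepA, h,
        (hfmem (j-1) (by omega) (by omega)).2, hπf j, ?_, ?_⟩
      · rw [hπf]; omega
      · rw [hπf]; omega
  have hchain := chain_lt (f := f)
    (P := fun m => 1 ≤ m ∧ m + 1 ≤ n ∧ m + 1 ≠ j)
    (fun m hm => hnd m hm.1 hm.2.1 hm.2.2)
  have hstepC : ∀ v, 1 ≤ v → v ≤ j → ∀ u, j+1 ≤ u → u ≤ n → f v < f u := by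
    intro v hv1 hv2 u hu1 hu2
    have h2 : f (j+1) ≤ f u := by
      rcases Nat.eq_or_lt_of_le hu1 with h | h
      · rw [h]
      · exact le_of_lt (hchain u (j+1) h (fun m hm hm' => ⟨by omega, by omega, by omega⟩))
    have h1 : f v ≤ f (j-1) ∨ v = j := by
      rcases Nat.lt_trichotomy v (j-1) with h | h | h
      · exact Or.inl (le_of_lt (hchain (j-1) v h (fun m hm hm' => ⟨by omega, by omega, by omega⟩)))
      · exact Or.inl (by rw [h])
      · exact Or.inr (by omega)
    rcases h1 with h | h
    · omega
    · subst h; omega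
  have hstepD : ∀ v, 1 ≤ v → v ≤ j → f v ≤ j := by
    intro v hv1 hv2
    have hsub : (Finset.Icc (j+1) n).image f ⊆ Finset.Icc (f v + 1) n := by
      intro y hy
      simp only [Finset.mem_image, Finset.mem_Icc] at hy ⊢
      obtain ⟨u, ⟨hu1, hu2⟩, rfl⟩ := hy
      exact ⟨hstepC v hv1 hv2 u hu1 hu2, (hfmem u (by omega) hu2).2⟩
    have hcard := Finset.card_le_card hsub
    rw [Finset.card_image_of_injective _ hfinj] at hcard
    rw [Nat.card_Icc, Nat.card_Icc] at hcard
    have := (hfmem v hv1 (by omega)).2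
    omega
  have himg : (Finset.Icc 1 j).image f = Finset.Icc 1 j := by
    apply Finset.eq_of_subset_of_card_le
    · intro y hy
      simp only [Finset.mem_image, Finset.mem_Icc] at hy ⊢
      obtain ⟨u, ⟨hu1, hu2⟩, rfl⟩ := hy
      exact ⟨(hfmem u hu1 (by omega)).1, hstepD u hu1 hu2⟩
    · rw [Finset.card_image_of_injective _ hfinj]
  intro x
  constructor
  · intro hx
    by_contra hxj
    push_neg at hxj
    rcases Nat.lt_or_ge n x with h | h
    · have : π x = x := hπ x (by simp only [Finset.mem_Icc]; omega)
      omega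
    · have hx1 : 1 ≤ π x := (supp_apply_mem hπ (by omega) h).1
      have := hstepD (π x) hx1 hx
      have : f (π x) = x := π.symm_apply_apply x
      omega
  · intro hx
    rcases Nat.eq_zero_or_pos x with h | h
    · subst h
      have : π 0 = 0 := hπ 0 (by simp)
      omega
    · have : x ∈ (Finset.Icc 1 j).image f := by rw [himg]; simp only [Finset.mem_Icc]; omega
      simp only [Finset.mem_image, Finset.mem_Icc] at this
      obtain ⟨v, ⟨hv1, hv2⟩, hvx⟩ := this
      rw [← hvx, hπf]
      omega

lemma inv_s_mul_apply {m : ℕ} (τ : Equiv.Perm ℕ) :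
    (s m * τ)⁻¹ m = τ⁻¹ (m + 1) ∧ (s m * τ)⁻¹ (m+1) = τ⁻¹ m := by
  constructor
  · simp [mul_inv_rev, Equiv.Perm.mul_apply, s, Equiv.swap_inv, Equiv.swap_apply_left]
  · simp [mul_inv_rev, Equiv.Perm.mul_apply, s, Equiv.swap_inv, Equiv.swap_apply_right]

lemma len_pos {n : ℕ} {π : Equiv.Perm ℕ} (hπ : Supp n π) (h1 : π ≠ 1) :
    0 < len n π := by
  obtain ⟨m, hm1, hm2, hd⟩ := exists_descent hπ h1
  have : (π⁻¹ (m+1), π⁻¹ m) ∈ inv n π := by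
    simp only [inv, Finset.mem_filter, Finset.mem_product]
    refine ⟨⟨?_, ?_⟩, hd, ?_⟩
    · simpa using supp_apply_mem (supp_inv hπ) (by omega) hm2
    · simpa using supp_apply_mem (supp_inv hπ) hm1 (by omega)
    · rw [show ∀ y, π (π⁻¹ y) = y from π.apply_symm_apply, show ∀ y, π (π⁻¹ y) = y from π.apply_symm_apply]; omega
  exact Finset.card_pos.mpr ⟨_, this⟩

lemma pres_wordProd {j : ℕ} {L : List ℕ} (h : ∀ i ∈ L, i ≠ j) :
    ∀ x, wordProd L x ≤ j ↔ x ≤ j := by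
  induction L with
  | nil => intro x; rw [wordProd_nil]; rfl
  | cons m L ih =>
    intro x
    rw [wordProd_cons, Equiv.Perm.mul_apply, s_le_iff (h m (by simp)),
      ih (fun i hi => h i (List.mem_cons_of_mem _ hi))]

lemma urun_cons (j m : ℕ) (L : List ℕ) :
    Urun j (m :: L) = L.foldl Ustep (Ustep (.healthy j) m) := rfl

lemma key_one {n j : ℕ} (hj2 : 2 ≤ j) :
    (∃ L, IsRWord n (1 : Equiv.Perm ℕ) L ∧ Urun j L ≠ .dead) ↔
      ¬ Occ n j (1 : Equiv.Perm ℕ) := by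
  constructor
  · rintro - ⟨p, q, r, h3, h4, h5, h6, h7, h8, h9⟩
    simp only [Equiv.Perm.one_apply] at h7 h8 h9
    omega
  · intro _
    refine ⟨[], (isRWord_iff (supp_one n) []).mpr ⟨by simp, rfl, by simp [len_one]⟩, ?_⟩
    simp [Urun]

lemma key {n : ℕ} : ∀ N j (π : Equiv.Perm ℕ), 2 ≤ j → j ≤ n → Supp n π →
    len n π ≤ N →
    ((∃ L, IsRWord n π L ∧ Urun j L ≠ .dead) ↔ ¬ Occ n j π) := by
  intro N
  induction N with
  | zero =>
    intro j π hj2 hjn hπ hlen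
    by_cases h1 : π = 1
    · subst h1; exact key_one hj2
    · exact absurd (len_pos hπ h1) (by omega)
  | succ N ih =>
    intro j π hj2 hjn hπ hlen
    by_cases h1 : π = 1
    · subst h1; exact key_one hj2
    rcases Nat.eq_or_lt_of_le hjn with hjn' | hjn'
    · -- j = n : automaton never dies, pattern impossible
      constructor
      · rintro - ⟨p, q, r, h3, h4, h5, h6, h7, h8, h9⟩
        have := (supp_apply_mem hπ (show 1 ≤ q by omega) (show q ≤ n by omega)).2
        omega
      · intro _
        obtain ⟨L, hL, hp, hl⟩ := exists_word hπ
        refine ⟨L, (isRWord_iff hπ L).mpr ⟨hL, hp, hl⟩, ?_⟩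
        exact (foldl_safe L (fun x hx => (mem_Icc_letter (hL x hx)).2) j
          (le_of_eq hjn'.symm)).1
    · -- j < n
      have hjn2 : j + 1 ≤ n := hjn'
      constructor
      · -- reduced accepted word ⟹ avoids pattern
        rintro ⟨L, hLr, hacc⟩
        obtain ⟨hL, hprod, hlen'⟩ := (isRWord_iff hπ L).mp hLr
        cases L with
        | nil => exact absurd hprod.symm h1
        | cons m L' =>
          obtain ⟨hm1, hm2⟩ := mem_Icc_letter (hL m (by simp))
          set π' := wordProd L' with hπ'
          have hL' : ∀ x ∈ L', x ∈ Finset.Icc 1 (n-1) :=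
            fun x hx => hL x (List.mem_cons_of_mem _ hx)
          have hsupp' : Supp n π' := supp_wordProd hL'
          have hprod' : π = s m * π' := by rw [← hprod, wordProd_cons]
          have hlen'le : len n π' ≤ L'.length := len_le_length hL'
          rcases lt_or_gt_of_ne (inv_ne_iff (m := m) (τ := π')) with hd | hd
          · have hlen1 : len n π = len n π' + 1 := by
              rw [hprod']; exact len_s_mul_of_lt hm1 hm2 hsupp' hd
            have hlenL' : L'.length = len n π' := by
              simp only [List.length_cons] at hlen'; omega
            have hdesc : π⁻¹ (m+1) < π⁻¹ m := by
              rw [hprod', (inv_s_mul_apply π').1, (inv_s_mul_apply π').2]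
              exact hd
            have hL'red : IsRWord n π' L' :=
              (isRWord_iff hsupp' L').mpr ⟨hL', rfl, hlenL'⟩
            rw [urun_cons] at hacc
            by_cases hmj : m = j
            · subst hmj
              have hstep : Ustep (.healthy m) m = .healthy (m+1) := by simp [Ustep]
              rw [hstep] at hacc
              have hih := (ih (m+1) π' (by omega) (by omega) hsupp' (by omega)).mp
                ⟨L', hL'red, hacc⟩
              intro hocc
              apply hih
              have : s m * π = π' := by rw [hprod', ← mul_assoc, s_mul_s, one_mul]
              rw [← this]
              exact (occ_up hdesc).mp hocc
            · by_cases hmj1 : m + 1 = j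
              · have hstep : Ustep (.healthy j) m = .ill j := by
                  simp [Ustep, hmj, hmj1]
                rw [hstep] at hacc
                have hnmem : j ∉ L' := not_mem_of_foldl_ill hacc
                have hpres' : ∀ x, π' x ≤ j ↔ x ≤ j :=
                  pres_wordProd (fun i hi hij => hnmem (hij ▸ hi))
                intro hocc
                have hpres'' : ∀ x, π' x ≤ m + 1 ↔ x ≤ m + 1 := by
                  rw [hmj1]; exact hpres'
                apply occ_ill (n := n) hpres''
                rw [hmj1, ← hprod']
                exact hocc
              · have hstep : Ustep (.healthy j) m = .healthy j := by
                  simp [Ustep, hmj, hmj1]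
                rw [hstep] at hacc
                have hih := (ih j π' hj2 hjn hsupp' (by omega)).mp ⟨L', hL'red, hacc⟩
                intro hocc
                exact hih ((occ_loop hmj hmj1).mp (hprod' ▸ hocc))
          · exfalso
            have : len n π' = len n (s m * π') + 1 :=
              len_s_mul_of_gt hm1 hm2 hsupp' hd
            rw [← hprod'] at this
            simp only [List.length_cons] at hlen'
            omega
      · -- avoids pattern ⟹ construct accepted reduced word
        intro hP
        by_cases hgen : ∃ m, 1 ≤ m ∧ m + 1 ≤ n ∧ m ≠ j ∧ m + 1 ≠ j ∧ π⁻¹ (m+1) < π⁻¹ m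
        · obtain ⟨m, hm1, hm2, hmj, hmj1, hd⟩ := hgen
          set π₁ := s m * π with hπ₁
          have hlen1 : len n π = len n π₁ + 1 := len_s_mul_of_gt hm1 hm2 hπ hd
          have hsupp1 : Supp n π₁ := supp_mul (supp_s hm1 hm2) hπ
          have hP1 : ¬ Occ n j π₁ := fun h => hP ((occ_loop hmj hmj1).mp h)
          obtain ⟨L₁, hL₁r, hacc₁⟩ :=
            (ih j π₁ hj2 hjn hsupp1 (by omega)).mpr hP1
          obtain ⟨hL₁, hp₁, hl₁⟩ := (isRWord_iff hsupp1 L₁).mp hL₁r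
          refine ⟨m :: L₁, (isRWord_iff hπ _).mpr ⟨?_, ?_, ?_⟩, ?_⟩
          · intro x hx
            rcases List.mem_cons.mp hx with h | h
            · subst h; simp only [Finset.mem_Icc]; omega
            · exact hL₁ x h
          · rw [wordProd_cons, hp₁, hπ₁, ← mul_assoc, s_mul_s, one_mul]
          · simp only [List.length_cons]; omega
          · rw [urun_cons]
            have hstep : Ustep (.healthy j) m = .healthy j := by
              simp [Ustep, hmj, hmj1]
            rw [hstep]
            exact hacc₁
        · by_cases hdj : π⁻¹ (j+1) < π⁻¹ j
          · set π₁ := s j * π with hπ₁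
            have hlen1 : len n π = len n π₁ + 1 :=
              len_s_mul_of_gt (by omega) hjn2 hπ hdj
            have hsupp1 : Supp n π₁ := supp_mul (supp_s (by omega) hjn2) hπ
            have hP1 : ¬ Occ n (j+1) π₁ := fun h => hP ((occ_up hdj).mpr h)
            obtain ⟨L₁, hL₁r, hacc₁⟩ :=
              (ih (j+1) π₁ (by omega) hjn2 hsupp1 (by omega)).mpr hP1
            obtain ⟨hL₁, hp₁, hl₁⟩ := (isRWord_iff hsupp1 L₁).mp hL₁r
            refine ⟨j :: L₁, (isRWord_iff hπ _).mpr ⟨?_, ?_, ?_⟩, ?_⟩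
            · intro x hx
              rcases List.mem_cons.mp hx with h | h
              · subst h; simp only [Finset.mem_Icc]; omega
              · exact hL₁ x h
            · rw [wordProd_cons, hp₁, hπ₁, ← mul_assoc, s_mul_s, one_mul]
            · simp only [List.length_cons]; omega
            · rw [urun_cons]
              have hstep : Ustep (.healthy j) j = .healthy (j+1) := by simp [Ustep]
              rw [hstep]
              exact hacc₁
          · -- all descents at j-1: ill route
            have hnd : ∀ m, 1 ≤ m → m + 1 ≤ n → m + 1 ≠ j → π⁻¹ m < π⁻¹ (m+1) := by
              intro m hm1 hm2 hm3
              have hne := inv_ne_iff (m := m) (τ := π)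
              by_cases hmj : m = j
              · subst hmj; omega
              · have : ¬ (π⁻¹ (m+1) < π⁻¹ m) := fun h => hgen ⟨m, hm1, hm2, hmj, hm3, h⟩
                omega
            have hpres := shuffle hπ hj2 hjn2 hnd hP
            obtain ⟨m, hm1, hm2, hd⟩ := exists_descent hπ h1
            have hmj1 : m + 1 = j := by
              by_contra h
              have := hnd m hm1 hm2 h
              omega
            set π₁ := s m * π with hπ₁
            have hlen1 : len n π = len n π₁ + 1 := len_s_mul_of_gt hm1 hm2 hπ hd
            have hsupp1 : Supp n π₁ := supp_mul (supp_s hm1 hm2) hπ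
            have hmj : m ≠ j := by omega
            have hpres1 : ∀ x, π₁ x ≤ j ↔ x ≤ j := by
              intro x
              rw [hπ₁, Equiv.Perm.mul_apply, s_le_iff hmj, hpres]
            obtain ⟨L₁, hL₁, hp₁, hl₁, hjL₁⟩ :=
              exists_word_avoid j (len n π₁) π₁ le_rfl hsupp1 hpres1
            refine ⟨m :: L₁, (isRWord_iff hπ _).mpr ⟨?_, ?_, ?_⟩, ?_⟩
            · intro x hx
              rcases List.mem_cons.mp hx with h | h
              · subst h; simp only [Finset.mem_Icc]; omega
              · exact hL₁ x h
            · rw [wordProd_cons, hp₁, hπ₁, ← mul_assoc, s_mul_s, one_mul]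
            · simp only [List.length_cons]; omega
            · rw [urun_cons]
              have hstep : Ustep (.healthy j) m = .ill j := by
                simp [Ustep, hmj, hmj1]
              rw [hstep]
              rw [foldl_ill_of_not_mem hjL₁]
              simp

end PT

/-- For `j ∈ [2, n-1]` and `π ∈ S_n` (a permutation of `ℕ` fixing everything outside
`[1,n]`, in one-line notation `π(1) π(2) ⋯ π(n)`): `π` has a reduced word accepted by
the automaton `𝕌(j)` (i.e. not ending in the dead state) if and only if `π` avoids the
pattern `jki`, i.e. no occurrence of the value `j` is followed later by a value `k > j`
followed later by a value `i < j`. -/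
theorem permutree_automaton_U (n j : ℕ) (hj2 : 2 ≤ j) (hjn : j ≤ n - 1)
    (π : Equiv.Perm ℕ) (hπ : ∀ x : ℕ, x ∉ Finset.Icc 1 n → π x = x) :
    (∃ L : List ℕ, IsRWord n π L ∧ Urun j L ≠ AState.dead) ↔
      ¬∃ p q r : ℕ, 1 ≤ p ∧ p < q ∧ q < r ∧ r ≤ n ∧
        π p = j ∧ j < π q ∧ π r < j := by
  have hn : j ≤ n := by omega
  exact PT.key (PT.len n π) j π hj2 hn hπ le_rfl
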